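/- For the Cartan Lie algebra with algebraic differential d_0 as above, the subspace E_0^2 := ker d_0 ∩ (range d_0)^⊥ of Λ²(𝔤*) (orthogonal complement taken with respect to the inner product making the θ_i∧θ_j orthonormal) is 3-dimensional and is spanned by θ_1∧θ_4, θ_2∧θ_4 + θ_1∧θ_5, and θ_2∧θ_5. -/

import Mathlib

noncomputable section

/-- Index set for the basis `θ_i ∧ θ_j`, `i < j`, of `Λ²(𝔤*)`. -/
abbrev Pair2 : Type := {ij : Fin 5 × Fin 5 // ij.1 < ij.2}

/-- Index set for the basis `θ_i ∧ θ_j ∧ θ_k`, `i < j < k`, of `Λ³(𝔤*)`. -/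
abbrev Triple3 : Type := {t : Fin 5 × Fin 5 × Fin 5 // t.1 < t.2.1 ∧ t.2.1 < t.2.2}

/-- The matrix of `d₀ : Λ¹ → Λ²` for the Cartan Lie algebra:
`d₀θ₃ = -θ₁∧θ₂`, `d₀θ₄ = -θ₁∧θ₃`, `d₀θ₅ = -θ₂∧θ₃`, `d₀θ₁ = d₀θ₂ = 0`. -/
def d01Mat : Matrix Pair2 (Fin 5) ℝ := fun p i =>
  if p.1 = ((0 : Fin 5), (1 : Fin 5)) ∧ i = 2 then -1
  else if p.1 = ((0 : Fin 5), (2 : Fin 5)) ∧ i = 3 then -1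
  else if p.1 = ((1 : Fin 5), (2 : Fin 5)) ∧ i = 4 then -1
  else 0

/-- The matrix of `d₀ : Λ² → Λ³` for the Cartan Lie algebra (obtained by
extending `d₀` as an antiderivation). -/
def d02Mat : Matrix Triple3 Pair2 ℝ := fun t p =>
  if t.1 = ((0 : Fin 5), (1 : Fin 5), (2 : Fin 5)) ∧ p.1 = ((0 : Fin 5), (4 : Fin 5)) then 1
  else if t.1 = ((0 : Fin 5), (1 : Fin 5), (2 : Fin 5)) ∧ p.1 = ((1 : Fin 5), (3 : Fin 5)) then -1
  else if t.1 = ((0 : Fin 5), (1 : Fin 5), (3 : Fin 5)) ∧ p.1 = ((2 : Fin 5), (3 : Fin 5)) then -1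
  else if t.1 = ((0 : Fin 5), (1 : Fin 5), (4 : Fin 5)) ∧ p.1 = ((2 : Fin 5), (4 : Fin 5)) then -1
  else if t.1 = ((0 : Fin 5), (2 : Fin 5), (4 : Fin 5)) ∧ p.1 = ((3 : Fin 5), (4 : Fin 5)) then -1
  else if t.1 = ((1 : Fin 5), (2 : Fin 5), (3 : Fin 5)) ∧ p.1 = ((3 : Fin 5), (4 : Fin 5)) then 1
  else 0

/-- `d₀ : Λ¹ → Λ²` as a linear map between Euclidean coordinate spaces. -/
noncomputable def d01 : EuclideanSpace ℝ (Fin 5) →ₗ[ℝ] EuclideanSpace ℝ Pair2 :=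
  Matrix.toEuclideanLin d01Mat

/-- `d₀ : Λ² → Λ³` as a linear map between Euclidean coordinate spaces. -/
noncomputable def d02 : EuclideanSpace ℝ Pair2 →ₗ[ℝ] EuclideanSpace ℝ Triple3 :=
  Matrix.toEuclideanLin d02Mat

/-- The coordinate vector of `θ_i ∧ θ_j`. -/
noncomputable def wdg (i j : Fin 5) : EuclideanSpace ℝ Pair2 :=
  WithLp.toLp 2 (fun p : Pair2 => if p.1 = (i, j) then 1 else 0)

/- ### Auxiliary material -/

abbrev pp01 : Pair2 := ⟨(0,1), by decide⟩
abbrev pp02 : Pair2 := ⟨(0,2), by decide⟩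
abbrev pp03 : Pair2 := ⟨(0,3), by decide⟩
abbrev pp04 : Pair2 := ⟨(0,4), by decide⟩
abbrev pp12 : Pair2 := ⟨(1,2), by decide⟩
abbrev pp13 : Pair2 := ⟨(1,3), by decide⟩
abbrev pp14 : Pair2 := ⟨(1,4), by decide⟩
abbrev pp23 : Pair2 := ⟨(2,3), by decide⟩
abbrev pp24 : Pair2 := ⟨(2,4), by decide⟩
abbrev pp34 : Pair2 := ⟨(3,4), by decide⟩

lemma univ_pair2 : (Finset.univ : Finset Pair2) =
    {pp01,pp02,pp03,pp04,pp12,pp13,pp14,pp23,pp24,pp34} := by decide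

lemma sum_pair2 (f : Pair2 → ℝ) :
    ∑ p : Pair2, f p = f pp01 + f pp02 + f pp03 + f pp04 + f pp12 + f pp13 + f pp14
      + f pp23 + f pp24 + f pp34 := by
  rw [univ_pair2]
  repeat rw [Finset.sum_insert (by decide)]
  rw [Finset.sum_singleton]; ring

lemma d02_apply (v : EuclideanSpace ℝ Pair2) (t : Triple3) :
    d02 v t = ∑ p : Pair2, d02Mat t p * v p := rfl

lemma d01_apply (x : EuclideanSpace ℝ (Fin 5)) (p : Pair2) :
    d01 x p = ∑ i : Fin 5, d01Mat p i * x i := rfl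

lemma inner_pair2 (x y : EuclideanSpace ℝ Pair2) :
    (inner ℝ x y : ℝ) = ∑ p : Pair2, x p * y p := by
  simp [PiLp.inner_apply, RCLike.inner_apply, mul_comm]

lemma add_apply' (x y : EuclideanSpace ℝ Pair2) (p : Pair2) : (x + y) p = x p + y p := rfl
lemma smul_apply' (c : ℝ) (x : EuclideanSpace ℝ Pair2) (p : Pair2) : (c • x) p = c * x p := rfl

lemma ker1 : d02 (wdg 0 3) = 0 := by
  ext t
  rw [d02_apply, sum_pair2]
  simp [d02Mat, wdg]

lemma ker2 : d02 (wdg 1 3 + wdg 0 4) = 0 := by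
  ext t
  rw [d02_apply, sum_pair2]
  simp only [add_apply']
  simp [d02Mat, wdg]
  split_ifs <;> norm_num

lemma ker3 : d02 (wdg 1 4) = 0 := by
  ext t
  rw [d02_apply, sum_pair2]
  simp [d02Mat, wdg]

lemma orth (g : EuclideanSpace ℝ Pair2) (hg : ∀ p : Pair2, g p ≠ 0 → ∀ i, d01Mat p i = 0) :
    g ∈ (LinearMap.range d01)ᗮ := by
  rw [Submodule.mem_orthogonal]
  rintro u ⟨x, rfl⟩
  rw [inner_pair2]
  rw [Finset.sum_eq_zero]
  intro p _
  by_cases h : g p = 0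
  · rw [h, mul_zero]
  · rw [d01_apply, Finset.sum_eq_zero (fun i _ => by rw [hg p h i, zero_mul]), zero_mul]

lemma orth1 : wdg 0 3 ∈ (LinearMap.range d01)ᗮ := by
  apply orth
  intro p hp i
  simp only [wdg, ne_eq, ite_eq_right_iff, one_ne_zero, imp_false, not_not] at hp
  simp [d01Mat, hp]

lemma orth2 : wdg 1 3 + wdg 0 4 ∈ (LinearMap.range d01)ᗮ := by
  apply orth
  intro p hp i
  simp only [add_apply', wdg, ne_eq] at hp
  have : p.1 = ((1 : Fin 5), (3 : Fin 5)) ∨ p.1 = ((0 : Fin 5), (4 : Fin 5)) := by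
    by_contra hc
    push_neg at hc
    simp [hc.1, hc.2] at hp
  rcases this with h | h <;> simp [d01Mat, h]

lemma orth3 : wdg 1 4 ∈ (LinearMap.range d01)ᗮ := by
  apply orth
  intro p hp i
  simp only [wdg, ne_eq, ite_eq_right_iff, one_ne_zero, imp_false, not_not] at hp
  simp [d01Mat, hp]

lemma indep : LinearIndependent ℝ ![wdg 0 3, wdg 1 3 + wdg 0 4, wdg 1 4] := by
  rw [Fintype.linearIndependent_iff]
  intro g hg
  rw [Fin.sum_univ_three] at hg
  simp only [Matrix.cons_val_zero, Matrix.cons_val_one, Matrix.head_cons,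
    Matrix.cons_val_two, Matrix.tail_cons] at hg
  have c1 := congrArg (fun w : EuclideanSpace ℝ Pair2 => w pp03) hg
  have c2 := congrArg (fun w : EuclideanSpace ℝ Pair2 => w pp04) hg
  have c3 := congrArg (fun w : EuclideanSpace ℝ Pair2 => w pp14) hg
  simp only [add_apply', smul_apply', wdg] at c1 c2 c3
  simp at c1 c2 c3
  intro i
  fin_cases i
  · exact c1
  · exact c2
  · exact c3


/-- The Rumin space `E₀² = ker d₀ ∩ (range d₀)^⊥` of the Cartan group is
3-dimensional, spanned by `θ₁∧θ₄`, `θ₂∧θ₄ + θ₁∧θ₅` and `θ₂∧θ₅`. -/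
theorem stmt16 :
    LinearMap.ker d02 ⊓ (LinearMap.range d01)ᗮ
      = Submodule.span ℝ {wdg 0 3, wdg 1 3 + wdg 0 4, wdg 1 4} ∧
    Module.finrank ℝ (LinearMap.ker d02 ⊓ (LinearMap.range d01)ᗮ : Submodule ℝ _) = 3 := by
  have heq : LinearMap.ker d02 ⊓ (LinearMap.range d01)ᗮ
      = Submodule.span ℝ {wdg 0 3, wdg 1 3 + wdg 0 4, wdg 1 4} := by
    apply le_antisymm
    · intro v hv
      rw [Submodule.mem_inf] at hv
      obtain ⟨h1, h2⟩ := hv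
      rw [LinearMap.mem_ker] at h1
      have e3 := (Submodule.mem_orthogonal _ v).mp h2 (d01 (EuclideanSpace.single 2 1)) ⟨_, rfl⟩
      have e4 := (Submodule.mem_orthogonal _ v).mp h2 (d01 (EuclideanSpace.single 3 1)) ⟨_, rfl⟩
      have e5 := (Submodule.mem_orthogonal _ v).mp h2 (d01 (EuclideanSpace.single 4 1)) ⟨_, rfl⟩
      rw [inner_pair2, sum_pair2] at e3 e4 e5
      simp only [d01_apply, Fin.sum_univ_five, d01Mat, EuclideanSpace.single_apply] at e3 e4 e5
      simp at e3 e4 e5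
      have k1 := congrArg (fun w : EuclideanSpace ℝ Triple3 => w ⟨(0,1,2), by decide⟩) h1
      have k2 := congrArg (fun w : EuclideanSpace ℝ Triple3 => w ⟨(0,1,3), by decide⟩) h1
      have k3 := congrArg (fun w : EuclideanSpace ℝ Triple3 => w ⟨(0,1,4), by decide⟩) h1
      have k4 := congrArg (fun w : EuclideanSpace ℝ Triple3 => w ⟨(0,2,4), by decide⟩) h1
      simp only [d02_apply, sum_pair2, d02Mat] at k1 k2 k3 k4
      simp at k1 k2 k3 k4
      have hv : v = v pp03 • wdg 0 3 + v pp04 • (wdg 1 3 + wdg 0 4) + v pp14 • wdg 1 4 := by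
        ext p
        simp only [add_apply', smul_apply']
        obtain ⟨⟨i, j⟩, hij⟩ := p
        fin_cases i <;> fin_cases j <;>
          first
          | exact absurd hij (by decide)
          | (simp [wdg]; all_goals first | rfl | assumption | linarith [e3, e4, e5, k1, k2, k3, k4])
      rw [hv]
      exact add_mem (add_mem
        (Submodule.smul_mem _ _ (Submodule.subset_span (by simp)))
        (Submodule.smul_mem _ _ (Submodule.subset_span (by simp))))
        (Submodule.smul_mem _ _ (Submodule.subset_span (by simp)))
    · rw [Submodule.span_le]
      rintro g hg
      simp only [Set.mem_insert_iff, Set.mem_singleton_iff] at hg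
      rcases hg with rfl | rfl | rfl
      · exact Submodule.mem_inf.mpr ⟨LinearMap.mem_ker.mpr ker1, orth1⟩
      · exact Submodule.mem_inf.mpr ⟨LinearMap.mem_ker.mpr ker2, orth2⟩
      · exact Submodule.mem_inf.mpr ⟨LinearMap.mem_ker.mpr ker3, orth3⟩
  refine ⟨heq, ?_⟩
  rw [heq]
  have hset : Set.range ![wdg 0 3, wdg 1 3 + wdg 0 4, wdg 1 4]
      = ({wdg 0 3, wdg 1 3 + wdg 0 4, wdg 1 4} : Set (EuclideanSpace ℝ Pair2)) := by
    ext x; simp [Matrix.range_cons, Matrix.range_empty]; tauto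
  rw [← hset, finrank_span_eq_card indep, Fintype.card_fin]
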